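/- Let R > 1, N ≥ 1, α > 1. Define a base distribution on two-token strings by p(a,⋆) = 1/(1+R) and p(b,i) = R/(N(1+R)) for i = 1,…,N (all other strings have probability 0). Let A be the event that the first token is a. Then under local (low-temperature) sharpening, Φ(A) = 1/(1+R^α), and under global (power) sharpening, Π(A) = 1/(1 + R^α/N^{α−1}). -/

import Mathlib

/-- For the base distribution `p(a,⋆) = 1/(1+R)`, `p(b,i) = R/(N(1+R))` for
`i = 1,…,N`, the locally sharpened probability of the event `A` (first token `a`)
is `1/(1+R^α)`, while the globally sharpened probability is
`1/(1 + R^α/N^(α-1))`. -/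
theorem local_vs_global_sharpening (R : ℝ) (N : ℕ) (α : ℝ)
    (hR : 1 < R) (hN : 1 ≤ N) (hα : 1 < α) :
    (1 / (1 + R)) ^ α / ((1 / (1 + R)) ^ α + (R / (1 + R)) ^ α) = 1 / (1 + R ^ α) ∧
    (1 / (1 + R)) ^ α /
        ((1 / (1 + R)) ^ α + (N : ℝ) * (R / ((N : ℝ) * (1 + R))) ^ α)
      = 1 / (1 + R ^ α / (N : ℝ) ^ (α - 1)) := by
  have hR0 : (0:ℝ) < R := lt_trans one_pos hR
  have hs : (0:ℝ) < 1 + R := by linarith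
  have hN0 : (0:ℝ) < (N:ℝ) := by exact_mod_cast Nat.lt_of_lt_of_le Nat.zero_lt_one hN
  have hsα : (0:ℝ) < (1 + R) ^ α := Real.rpow_pos_of_pos hs α
  have hRα : (0:ℝ) < R ^ α := Real.rpow_pos_of_pos hR0 α
  have hNα : (0:ℝ) < (N:ℝ) ^ α := Real.rpow_pos_of_pos hN0 α
  have hNα1 : (0:ℝ) < (N:ℝ) ^ (α - 1) := Real.rpow_pos_of_pos hN0 _
  have h1 : (1 / (1 + R)) ^ α = 1 / (1 + R) ^ α := by
    rw [Real.div_rpow zero_le_one hs.le, Real.one_rpow]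
  have h2 : (R / (1 + R)) ^ α = R ^ α / (1 + R) ^ α := by
    rw [Real.div_rpow hR0.le hs.le]
  have h3 : (R / ((N:ℝ) * (1 + R))) ^ α = R ^ α / ((N:ℝ) ^ α * (1 + R) ^ α) := by
    rw [Real.div_rpow hR0.le (by positivity), Real.mul_rpow hN0.le hs.le]
  have hNsub : (N:ℝ) ^ (α - 1) = (N:ℝ) ^ α / (N:ℝ) := by
    rw [Real.rpow_sub hN0, Real.rpow_one]
  constructor
  · rw [h1, h2]
    field_simp
  · rw [h1, h3, hNsub]
    field_simp
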